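/- Let 𝒫 be a class property such that every class in 𝒫 has sublinear separators. If 𝒢 is a fractionally 𝒫-fragile class of graphs, then 𝒢 has sublinear separators. -/

import Mathlib

open Classical Filter

attribute [local instance] Classical.propDecidable

noncomputable section

/-- A finite graph, bundled with its (finite) vertex type. -/
structure FGraph : Type 1 where
  V : Type
  [fin : Fintype V]
  G : SimpleGraph V

attribute [instance] FGraph.fin

namespace FGraph

/-- The number of vertices. -/
def card (G : FGraph) : ℕ := Fintype.card G.V

/-- The number of edges. -/
def edgeCount (G : FGraph) : ℕ := G.G.edgeSet.ncard

/-- The edge density `|E(G)|/|V(G)|`. -/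
def density (G : FGraph) : ℝ := (G.edgeCount : ℝ) / (G.card : ℝ)

/-- `G − X`: the subgraph induced by the complement of `X`. -/
def del (G : FGraph) (X : Set G.V) : FGraph := ⟨↥(Xᶜ), G.G.induce (Xᶜ : Set G.V)⟩

/-- `H` is (isomorphic to) a subgraph of `G`. -/
def IsSubgraphOf (H G : FGraph) : Prop :=
  ∃ f : H.V → G.V, Function.Injective f ∧ ∀ a b, H.G.Adj a b → G.G.Adj (f a) (f b)

/-- The class `C` is closed under taking subgraphs. -/
def SubgraphClosed (C : Set FGraph) : Prop :=
  ∀ G ∈ C, ∀ H : FGraph, IsSubgraphOf H G → H ∈ C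

/-- `G` has maximum degree at most `d`. -/
def maxDegLE (G : FGraph) (d : ℕ) : Prop := ∀ v : G.V, (G.G.neighborSet v).ncard ≤ d

/-- The maximum degree of `G`. -/
def maxDeg (G : FGraph) : ℕ := Finset.univ.sup fun v : G.V => (G.G.neighborSet v).ncard

/-- The class `C` has bounded maximum degree. -/
def BddMaxDeg (C : Set FGraph) : Prop := ∃ Δ : ℕ, ∀ G ∈ C, G.maxDegLE Δ

/-- `H` is a `d`-minor of `G`: obtained by contracting pairwise disjoint subgraphs of
radius at most `d` (the branch sets `B w`) and deleting vertices and edges. -/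
def IsMinor (d : ℕ) (H G : FGraph) : Prop :=
  ∃ B : H.V → Set G.V,
    (∀ w, (B w).Nonempty) ∧
    (Pairwise fun w w' => Disjoint (B w) (B w')) ∧
    (∀ w : H.V, ∃ v ∈ B w, ∀ u ∈ B w, ∃ p : G.G.Walk v u,
      p.length ≤ d ∧ ∀ x ∈ p.support, x ∈ B w) ∧
    (∀ w w' : H.V, H.G.Adj w w' → ∃ v ∈ B w, ∃ v' ∈ B w', G.G.Adj v v')

/-- The complete graph `K_t` as a bundled finite graph. -/
def completeFG (t : ℕ) : FGraph := ⟨Fin t, ⊤⟩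

/-- The set of densities of `k`-minors of graphs in the class `C`. -/
def densSet (k : ℕ) (C : Set FGraph) : Set ℝ :=
  {r | ∃ G ∈ C, ∃ H : FGraph, IsMinor k H G ∧ r = H.density}

/-- `∇_k(C)`: the supremum of densities of `k`-minors of graphs in `C`. -/
def nablaClass (k : ℕ) (C : Set FGraph) : ℝ := sSup (densSet k C)

/-- `G` has a balanced separation of size at most `s`. -/
def SepAtMost (G : FGraph) (s : ℕ) : Prop :=
  ∃ A B : G.G.Subgraph, A ⊔ B = ⊤ ∧ Disjoint A.edgeSet B.edgeSet ∧
    3 * (A.verts \ B.verts).ncard ≤ 2 * G.card ∧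
    3 * (B.verts \ A.verts).ncard ≤ 2 * G.card ∧
    (A.verts ∩ B.verts).ncard ≤ s

/-- `s_C(n)`: the smallest `s` such that every graph in `C` with at most `n` vertices
has a balanced separation of size at most `s`. -/
def sepf (C : Set FGraph) (n : ℕ) : ℕ :=
  sInf {s | ∀ G ∈ C, G.card ≤ n → SepAtMost G s}

/-- The class `C` has sublinear separators. -/
def SublinearSep (C : Set FGraph) : Prop :=
  Tendsto (fun n : ℕ => (sepf C n : ℝ) / (n : ℝ)) atTop (nhds 0)

/-- The class `C` has strongly sublinear separators. -/
def StronglySublinearSep (C : Set FGraph) : Prop :=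
  ∃ c δ : ℝ, 1 ≤ c ∧ 0 ≤ δ ∧ δ < 1 ∧ ∀ n : ℕ, (sepf C n : ℝ) ≤ c * (n : ℝ) ^ δ

/-- The number of vertices of the connected component of `v`. -/
def compSize (G : FGraph) (v : G.V) : ℕ := ((G.G.connectedComponentMk v).supp).ncard

/-- `G` has a fractional `C`-complementary packing of thickness at most `ε`. -/
def FracPack (G : FGraph) (C : Set FGraph) (ε : ℝ) : Prop :=
  ∃ π : Finset G.V → ℝ,
    (∀ X, 0 ≤ π X) ∧
    (∑ X : Finset G.V, π X = 1) ∧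
    (∀ X : Finset G.V, π X ≠ 0 → G.del (↑X : Set G.V) ∈ C) ∧
    (∀ v : G.V, ∑ X ∈ Finset.univ.filter (fun X : Finset G.V => v ∈ X), π X ≤ ε)

/-- `C` is an `ε`-witness for the class `Gc`: every graph in `Gc` has a fractional
`C`-complementary packing of thickness at most `ε`. -/
def Witness (C Gc : Set FGraph) (ε : ℝ) : Prop := ∀ G ∈ Gc, FracPack G C ε

/-- `Gc` is fractionally `P`-fragile. -/
def FracFragile (P : Set (Set FGraph)) (Gc : Set FGraph) : Prop :=
  ∀ ε : ℝ, 0 < ε → ∃ C ∈ P, Witness C Gc ε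

/-- The class property `Vs` of all graph classes with bounded component size. -/
def Vs : Set (Set FGraph) := {C | ∃ t : ℕ, ∀ G ∈ C, ∀ v : G.V, G.compSize v ≤ t}

/-- `(T, β)` is a tree decomposition of `G`. -/
def IsTreeDecomp (G : FGraph) {ι : Type} (T : SimpleGraph ι) (β : ι → Set G.V) : Prop :=
  T.IsTree ∧
  (∀ v : G.V, ∃ u, v ∈ β u) ∧
  (∀ v w : G.V, G.G.Adj v w → ∃ u, v ∈ β u ∧ w ∈ β u) ∧
  (∀ v : G.V, (T.induce {u | v ∈ β u}).Connected)

/-- `G` has treewidth at most `k`. -/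
def twLE (G : FGraph) (k : ℕ) : Prop :=
  ∃ (ι : Type) (_ : Fintype ι) (T : SimpleGraph ι) (β : ι → Set G.V),
    IsTreeDecomp G T β ∧ ∀ u, (β u).ncard ≤ k + 1

/-- The treewidth of `G`. -/
def treewidth (G : FGraph) : ℕ := sInf {k | twLE G k}

/-- The class property `Tw` of all graph classes with bounded treewidth. -/
def Tw : Set (Set FGraph) := {C | ∃ k : ℕ, ∀ G ∈ C, twLE G k}

end FGraph
/-- Monotonicity of `SepAtMost` in the bound. -/
lemma sep_mono {G : FGraph} {s t : ℕ} (h : G.SepAtMost s) (hst : s ≤ t) :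
    G.SepAtMost t := by
  obtain ⟨A, B, h1, h2, h3, h4, h5⟩ := h
  exact ⟨A, B, h1, h2, h3, h4, h5.trans hst⟩

/-- Every graph has a trivial balanced separation of size its vertex count. -/
lemma sep_trivial (G : FGraph) : G.SepAtMost G.card := by
  refine ⟨⊤, ⟨Set.univ, fun _ _ => False, fun h => h.elim, fun h => h.elim,
    ⟨fun _ _ h => h⟩⟩, ?_, ?_, ?_, ?_, ?_⟩
  · exact top_sup_eq _
  · rw [Set.disjoint_right]
    intro e he
    induction e using Sym2.ind with
    | _ a b => exact (SimpleGraph.Subgraph.mem_edgeSet.mp he).elim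
  · simp
  · simp
  · simp only [SimpleGraph.Subgraph.verts_top, Set.univ_inter, Set.ncard_univ]
    rw [Nat.card_eq_fintype_card]
    exact le_refl _
/-- The value `sepf C n` is itself achieved: every small graph in `C` has a
balanced separation of that size. -/
lemma sepf_mem (C : Set FGraph) (n : ℕ) :
    ∀ G ∈ C, G.card ≤ n → G.SepAtMost (FGraph.sepf C n) := by
  have hne : n ∈ {s | ∀ G ∈ C, G.card ≤ n → FGraph.SepAtMost G s} :=
    fun G _ hc => sep_mono (sep_trivial G) hc
  exact Nat.sInf_mem ⟨n, hne⟩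

/-- From a fractional packing of thickness `ε`, extract a small deletion set. -/
lemma frac_choose (G : FGraph) (C : Set FGraph) (ε : ℝ) (h : G.FracPack C ε) :
    ∃ X : Finset G.V, G.del (↑X : Set G.V) ∈ C ∧ (X.card : ℝ) ≤ ε * G.card := by
  obtain ⟨π, hpos, hsum, hmem, hthick⟩ := h
  by_contra hcon
  push_neg at hcon
  have key : ∑ X : Finset G.V, π X * X.card ≤ ε * G.card := by
    calc ∑ X : Finset G.V, π X * X.card
        = ∑ X : Finset G.V, ∑ v : G.V, if v ∈ X then π X else 0 := by
          refine Finset.sum_congr rfl fun X _ => ?_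
          rw [Finset.sum_ite_mem, Finset.univ_inter, Finset.sum_const, nsmul_eq_mul, mul_comm]
      _ = ∑ v : G.V, ∑ X : Finset G.V, if v ∈ X then π X else 0 := Finset.sum_comm
      _ ≤ ∑ _v : G.V, ε := by
          refine Finset.sum_le_sum fun v _ => ?_
          rw [← Finset.sum_filter]
          exact hthick v
      _ = ε * G.card := by
          rw [Finset.sum_const, Finset.card_univ, nsmul_eq_mul, mul_comm]
          rfl
  have lower : ε * G.card < ∑ X : Finset G.V, π X * X.card := by
    have h1 : ε * G.card = ∑ X : Finset G.V, π X * (ε * G.card) := by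
      rw [← Finset.sum_mul, hsum, one_mul]
    rw [h1]
    obtain ⟨X₀, _, hX₀⟩ := Finset.exists_ne_zero_of_sum_ne_zero
      (by rw [hsum]; exact one_ne_zero)
    refine Finset.sum_lt_sum (fun X _ => ?_) ⟨X₀, Finset.mem_univ _, ?_⟩
    · by_cases hX : π X = 0
      · simp [hX]
      · exact mul_le_mul_of_nonneg_left (le_of_lt (hcon X (hmem X hX))) (hpos X)
    · exact mul_lt_mul_of_pos_left (hcon X₀ (hmem X₀ hX₀))
        (lt_of_le_of_ne (hpos X₀) (Ne.symm hX₀))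
  linarith
/-- Lifting a balanced separation of `G − X` to one of `G`, at the cost of `|X|`. -/
lemma sep_lift (G : FGraph) (X : Finset G.V) (s : ℕ)
    (h : (G.del (↑X : Set G.V)).SepAtMost s) : G.SepAtMost (s + X.card) := by
  set Xs : Set G.V := (↑X : Set G.V) with hXsdef
  obtain ⟨A', B', hsup, hdisj, hbalA, hbalB, hsep⟩ := h
  set imA : Set G.V := Subtype.val '' A'.verts with himA
  set imB : Set G.V := Subtype.val '' B'.verts with himB
  have himAX : ∀ a ∈ imA, a ∉ Xs := by rintro a ⟨u, _, rfl⟩; exact u.2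
  have hverts : A'.verts ∪ B'.verts = Set.univ := by
    have := congrArg SimpleGraph.Subgraph.verts hsup
    simpa using this
  have hAdjCov : ∀ u v : ↥(Xsᶜ), (G.del Xs).G.Adj u v → A'.Adj u v ∨ B'.Adj u v := by
    intro u v huv
    have h2 : (A' ⊔ B').Adj u v := by
      rw [hsup]; exact SimpleGraph.Subgraph.top_adj.mpr huv
    exact SimpleGraph.Subgraph.sup_adj.mp h2
  have hvertCov : ∀ a : G.V, a ∉ Xs → a ∈ imA ∪ imB := by
    intro a ha
    have : (⟨a, ha⟩ : ↥(Xsᶜ)) ∈ A'.verts ∪ B'.verts := hverts ▸ Set.mem_univ _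
    rcases this with h' | h'
    · exact Or.inl ⟨_, h', rfl⟩
    · exact Or.inr ⟨_, h', rfl⟩
  let A : G.G.Subgraph :=
    { verts := imA ∪ Xs
      Adj := fun a b => G.G.Adj a b ∧
        ((∃ (ha : a ∈ Xsᶜ) (hb : b ∈ Xsᶜ), A'.Adj ⟨a, ha⟩ ⟨b, hb⟩) ∨
          (a ∈ Xs ∧ b ∈ Xs) ∨ (a ∈ Xs ∧ b ∈ imA) ∨ (b ∈ Xs ∧ a ∈ imA))
      adj_sub := fun h => h.1
      edge_vert := by
        rintro a b ⟨hab, hcase⟩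
        rcases hcase with ⟨ha, hb, hadj⟩ | ⟨ha, hb⟩ | ⟨ha, hb⟩ | ⟨hb, ha⟩
        · exact Or.inl ⟨_, A'.edge_vert hadj, rfl⟩
        · exact Or.inr ha
        · exact Or.inr ha
        · exact Or.inl ha
      symm := by
        constructor
        rintro a b ⟨hab, hcase⟩
        refine ⟨hab.symm, ?_⟩
        rcases hcase with ⟨ha, hb, hadj⟩ | ⟨ha, hb⟩ | h2 | h2
        · exact Or.inl ⟨hb, ha, A'.adj_symm hadj⟩
        · exact Or.inr (Or.inl ⟨hb, ha⟩)
        · exact Or.inr (Or.inr (Or.inr h2))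
        · exact Or.inr (Or.inr (Or.inl h2)) }
  let B : G.G.Subgraph :=
    { verts := imB ∪ Xs
      Adj := fun a b => G.G.Adj a b ∧
        ((∃ (ha : a ∈ Xsᶜ) (hb : b ∈ Xsᶜ), B'.Adj ⟨a, ha⟩ ⟨b, hb⟩) ∨
          (a ∈ Xs ∧ b ∉ Xs ∧ b ∉ imA) ∨ (b ∈ Xs ∧ a ∉ Xs ∧ a ∉ imA))
      adj_sub := fun h => h.1
      edge_vert := by
        rintro a b ⟨hab, hcase⟩
        rcases hcase with ⟨ha, hb, hadj⟩ | ⟨ha, hb⟩ | ⟨hb, ha1, ha2⟩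
        · exact Or.inl ⟨_, B'.edge_vert hadj, rfl⟩
        · exact Or.inr ha
        · rcases hvertCov a ha1 with h' | h'
          · exact absurd h' ha2
          · exact Or.inl h'
      symm := by
        constructor
        rintro a b ⟨hab, hcase⟩
        refine ⟨hab.symm, ?_⟩
        rcases hcase with ⟨ha, hb, hadj⟩ | h2 | h2
        · exact Or.inl ⟨hb, ha, B'.adj_symm hadj⟩
        · exact Or.inr (Or.inr h2)
        · exact Or.inr (Or.inl h2) }
  refine ⟨A, B, ?_, ?_, ?_, ?_, ?_⟩
  · -- A ⊔ B = ⊤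
    refine le_antisymm le_top ⟨?_, ?_⟩
    · intro a _
      rw [SimpleGraph.Subgraph.verts_sup]
      by_cases ha : a ∈ Xs
      · exact Or.inl (Or.inr ha)
      · rcases hvertCov a ha with h' | h'
        · exact Or.inl (Or.inl h')
        · exact Or.inr (Or.inl h')
    · intro a b hab
      have hG : G.G.Adj a b := SimpleGraph.Subgraph.top_adj.mp hab
      rw [SimpleGraph.Subgraph.sup_adj]
      by_cases ha : a ∈ Xs <;> by_cases hb : b ∈ Xs
      · exact Or.inl ⟨hG, Or.inr (Or.inl ⟨ha, hb⟩)⟩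
      · by_cases hbA : b ∈ imA
        · exact Or.inl ⟨hG, Or.inr (Or.inr (Or.inl ⟨ha, hbA⟩))⟩
        · exact Or.inr ⟨hG, Or.inr (Or.inl ⟨ha, hb, hbA⟩)⟩
      · by_cases haA : a ∈ imA
        · exact Or.inl ⟨hG, Or.inr (Or.inr (Or.inr ⟨hb, haA⟩))⟩
        · exact Or.inr ⟨hG, Or.inr (Or.inr ⟨hb, ha, haA⟩)⟩
      · have hdel : (G.del Xs).G.Adj ⟨a, ha⟩ ⟨b, hb⟩ := hG
        rcases hAdjCov _ _ hdel with h' | h'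
        · exact Or.inl ⟨hG, Or.inl ⟨ha, hb, h'⟩⟩
        · exact Or.inr ⟨hG, Or.inl ⟨ha, hb, h'⟩⟩
  · -- edge disjointness
    rw [Set.disjoint_left]
    intro e heA heB
    induction e using Sym2.ind with
    | _ a b =>
      obtain ⟨hab, hcA⟩ := SimpleGraph.Subgraph.mem_edgeSet.mp heA
      obtain ⟨_, hcB⟩ := SimpleGraph.Subgraph.mem_edgeSet.mp heB
      rcases hcA with ⟨ha, hb, hadjA⟩ | ⟨ha, hb⟩ | ⟨ha, hbA⟩ | ⟨hb, haA⟩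
      · rcases hcB with ⟨ha', hb', hadjB⟩ | ⟨ha', _⟩ | ⟨hb', _⟩
        · exact Set.disjoint_left.mp hdisj
            (SimpleGraph.Subgraph.mem_edgeSet.mpr hadjA)
            (SimpleGraph.Subgraph.mem_edgeSet.mpr hadjB)
        · exact ha ha'
        · exact hb hb'
      · rcases hcB with ⟨ha', _, _⟩ | ⟨_, hb', _⟩ | ⟨_, ha', _⟩
        · exact ha' ha
        · exact hb' hb
        · exact ha' ha
      · rcases hcB with ⟨ha', _, _⟩ | ⟨_, _, hb'⟩ | ⟨_, ha', _⟩
        · exact ha' ha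
        · exact hb' hbA
        · exact ha' ha
      · rcases hcB with ⟨_, hb', _⟩ | ⟨ha', _, _⟩ | ⟨_, _, ha'⟩
        · exact hb' hb
        · exact himAX a haA ha'
        · exact ha' haA
  · -- balance A
    have hsub : A.verts \ B.verts ⊆ Subtype.val '' (A'.verts \ B'.verts) := by
      rintro a ⟨haA, haB⟩
      have haX : a ∉ Xs := fun hx => haB (Or.inr hx)
      rcases haA with h' | h'
      · obtain ⟨u, hu, rfl⟩ := h'
        exact ⟨u, ⟨hu, fun hb => haB (Or.inl ⟨u, hb, rfl⟩)⟩, rfl⟩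
      · exact absurd h' haX
    have h1 : (A.verts \ B.verts).ncard ≤ (A'.verts \ B'.verts).ncard := by
      have := Set.ncard_le_ncard hsub (Set.toFinite _)
      rwa [Set.ncard_image_of_injective _ Subtype.val_injective] at this
    have h2 : (G.del Xs).card ≤ G.card :=
      Fintype.card_le_of_injective (Subtype.val : (G.del Xs).V → G.V)
        Subtype.val_injective
    omega
  · -- balance B
    have hsub : B.verts \ A.verts ⊆ Subtype.val '' (B'.verts \ A'.verts) := by
      rintro a ⟨haB, haA⟩
      have haX : a ∉ Xs := fun hx => haA (Or.inr hx)
      rcases haB with h' | h'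
      · obtain ⟨u, hu, rfl⟩ := h'
        exact ⟨u, ⟨hu, fun hb => haA (Or.inl ⟨u, hb, rfl⟩)⟩, rfl⟩
      · exact absurd h' haX
    have h1 : (B.verts \ A.verts).ncard ≤ (B'.verts \ A'.verts).ncard := by
      have := Set.ncard_le_ncard hsub (Set.toFinite _)
      rwa [Set.ncard_image_of_injective _ Subtype.val_injective] at this
    have h2 : (G.del Xs).card ≤ G.card :=
      Fintype.card_le_of_injective (Subtype.val : (G.del Xs).V → G.V)
        Subtype.val_injective
    omega
  · -- separator size
    have hsub2 : A.verts ∩ B.verts ⊆ (Subtype.val '' (A'.verts ∩ B'.verts)) ∪ Xs := by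
      rintro a ⟨haA, haB⟩
      by_cases haX : a ∈ Xs
      · exact Or.inr haX
      left
      rcases haA with h' | h'
      swap
      · exact absurd h' haX
      obtain ⟨u, hu, rfl⟩ := h'
      rcases haB with h'' | h''
      swap
      · exact absurd h'' haX
      obtain ⟨u', hu', hval⟩ := h''
      exact ⟨u, ⟨hu, (Subtype.ext hval : u' = u) ▸ hu'⟩, rfl⟩
    calc (A.verts ∩ B.verts).ncard
        ≤ ((Subtype.val '' (A'.verts ∩ B'.verts)) ∪ Xs).ncard :=
          Set.ncard_le_ncard hsub2 (Set.toFinite _)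
      _ ≤ (Subtype.val '' (A'.verts ∩ B'.verts)).ncard + Xs.ncard :=
          Set.ncard_union_le _ _
      _ ≤ s + X.card := by
          rw [Set.ncard_image_of_injective _ Subtype.val_injective]
          have hx : Xs.ncard = X.card := Set.ncard_coe_finset X
          exact Nat.add_le_add hsep hx.le
/-- **Lemma 14.** If every class in `P` has sublinear separators and `Gc` is fractionally
`P`-fragile, then `Gc` has sublinear separators. -/
theorem stmt7 (P : Set (Set FGraph)) (h : ∀ C ∈ P, FGraph.SublinearSep C)
    (Gc : Set FGraph) (hfrag : FGraph.FracFragile P Gc) :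
    FGraph.SublinearSep Gc := by
  refine tendsto_order.2 ⟨fun a ha => ?_, fun a ha => ?_⟩
  · filter_upwards with n
    exact lt_of_lt_of_le ha (div_nonneg (Nat.cast_nonneg _) (Nat.cast_nonneg _))
  · obtain ⟨C, hCP, hW⟩ := hfrag (a / 2) (by linarith)
    have hC := h C hCP
    have hev : ∀ᶠ n in atTop, (FGraph.sepf C n : ℝ) / n < a / 2 :=
      hC.eventually (gt_mem_nhds (by linarith))
    filter_upwards [hev, eventually_ge_atTop 1] with n hn hn1
    have key : FGraph.sepf Gc n ≤ FGraph.sepf C n + Nat.floor ((a / 2) * n) := by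
      apply Nat.sInf_le
      intro G hG hcard
      obtain ⟨Xf, hXC, hXcard⟩ := frac_choose G C (a / 2) (hW G hG)
      have hdelcard : (G.del (↑Xf : Set G.V)).card ≤ G.card :=
        Fintype.card_le_of_injective
          (Subtype.val : (G.del (↑Xf : Set G.V)).V → G.V) Subtype.val_injective
      have h1 : (G.del (↑Xf : Set G.V)).SepAtMost (FGraph.sepf C n) :=
        sepf_mem C n _ hXC (hdelcard.trans hcard)
      have h2 := sep_lift G Xf _ h1
      refine sep_mono h2 ?_
      have hle : (Xf.card : ℝ) ≤ (a / 2) * n := by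
        refine hXcard.trans ?_
        have : (G.card : ℝ) ≤ (n : ℝ) := by exact_mod_cast hcard
        nlinarith
      have := Nat.le_floor hle
      omega
    have h0 : (0 : ℝ) < n := by
      have : (1 : ℝ) ≤ n := by exact_mod_cast hn1
      linarith
    have key' : (FGraph.sepf Gc n : ℝ) ≤ (FGraph.sepf C n : ℝ) + (a / 2) * n := by
      have hfl : (Nat.floor ((a / 2) * (n : ℝ)) : ℝ) ≤ (a / 2) * n :=
        Nat.floor_le (by positivity)
      have : (FGraph.sepf Gc n : ℝ) ≤
          (FGraph.sepf C n : ℝ) + (Nat.floor ((a / 2) * (n : ℝ)) : ℝ) := by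
        exact_mod_cast key
      linarith
    have hdiv : (FGraph.sepf Gc n : ℝ) / n ≤ (FGraph.sepf C n : ℝ) / n + a / 2 := by
      rw [div_add' _ _ _ (ne_of_gt h0)]
      exact (div_le_div_iff_of_pos_right h0).mpr (by linarith)
    linarith
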